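/- Let α be a type of operations, rd : α → ℕ a round assignment, and P : α → α → Prop a relation (the process order) such that (i) every a : α has only finitely many P-predecessors (the set {b | P b a} is finite) and (ii) P a b implies rd a ≤ rd b. Suppose that for every r : ℕ there is a linear order ≤_r on the fiber {a // rd a = r} such that every element of the fiber has only finitely many strict ≤_r-predecessors in the fiber, and such that whenever P a b with rd a = rd b = r, one has a ≤_r b. Then there exists a linear order ≤ on α such that: P a b implies a ≤ b; for a, b in the same fiber r, a ≤_r b implies a ≤ b; and every element of α has only finitely many strict ≤-predecessors. (This is the order-theoretic content of the paper's Proposition 2: round-based sequentially consistent objects compose, because the per-round linear extensions and the process order admit a common linear extension in which every operation has a finite past.) -/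

import Mathlib

section RBC
variable {α : Type*} (rd : α → ℕ) (L : ∀ r : ℕ, LinearOrder {a : α // rd a = r})

/-- position of an element within its round -/
noncomputable def rbcPc (r : ℕ) (x : {a : α // rd a = r}) : ℕ :=
  {y | (L r).lt y x}.ncard

lemma rbcPc_congr {r s : ℕ} (h : r = s) (a : α) (ha : rd a = r) :
    rbcPc rd L r ⟨a, ha⟩ = rbcPc rd L s ⟨a, ha.trans h⟩ := by subst h; rfl

variable (P : α → α → Prop)

/-- one covering step -/
def rbcRs (a b : α) : Prop :=
  a ≠ b ∧ (P a b ∨ ∃ h : rd a = rd b, (L (rd b)).lt ⟨a, h⟩ ⟨b, rfl⟩)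

noncomputable def rbcMu (a : α) : ℕ ×ₗ ℕ :=
  toLex (rd a, rbcPc rd L (rd a) ⟨a, rfl⟩)

noncomputable def rbcE (a : α) : ℕ :=
  Nat.pair (rd a) (rbcPc rd L (rd a) ⟨a, rfl⟩)

noncomputable def rbcK (a : α) : ℕ :=
  {b | Relation.TransGen (rbcRs rd L P) b a}.ncard

noncomputable def rbcF (a : α) : ℕ :=
  sInf {n | ∃ c, rbcE rd L c = n ∧ Relation.ReflTransGen (rbcRs rd L P) a c}

noncomputable def rbcKey (a : α) : ℕ ×ₗ (ℕ ×ₗ ℕ) :=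
  toLex (rbcF rd L P a, toLex (rbcK rd L P a, rbcE rd L a))

end RBC

theorem round_based_composition_order
    {α : Type*} (rd : α → ℕ) (P : α → α → Prop)
    (hPfin : ∀ a : α, {b : α | P b a}.Finite)
    (hPrd : ∀ a b : α, P a b → rd a ≤ rd b)
    (L : ∀ r : ℕ, LinearOrder {a : α // rd a = r})
    (hLfin : ∀ (r : ℕ) (x : {a : α // rd a = r}), {y : {a : α // rd a = r} | (L r).lt y x}.Finite)
    (hLP : ∀ (r : ℕ) (a b : α) (ha : rd a = r) (hb : rd b = r),
      P a b → (L r).le ⟨a, ha⟩ ⟨b, hb⟩) :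
    ∃ L' : LinearOrder α,
      (∀ a b : α, P a b → L'.le a b) ∧
      (∀ (r : ℕ) (a b : α) (ha : rd a = r) (hb : rd b = r),
        (L r).le ⟨a, ha⟩ ⟨b, hb⟩ → L'.le a b) ∧
      (∀ a : α, {b : α | L'.lt b a}.Finite) := by
  classical
  set Rs := rbcRs rd L P with hRs
  -- strict monotonicity of pc within a round
  have pclt : ∀ (r : ℕ) (x y : {a : α // rd a = r}), (L r).lt x y →
      rbcPc rd L r x < rbcPc rd L r y := by
    intro r x y hxy
    letI := L r
    refine Set.ncard_lt_ncard ?_ (hLfin r y)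
    constructor
    · intro z hz; exact lt_trans hz hxy
    · intro hsub
      exact absurd (hsub (show x ∈ {z | z < y} from hxy)) (lt_irrefl x)
  have pcinj : ∀ (r : ℕ) (x y : {a : α // rd a = r}),
      rbcPc rd L r x = rbcPc rd L r y → x = y := by
    intro r x y h
    letI := L r
    rcases lt_trichotomy x y with hl | he | hl
    · exact absurd h (pclt r x y hl).ne
    · exact he
    · exact absurd h.symm (pclt r y x hl).ne
  -- μ strictly decreases along Rs
  have muRs : ∀ a b : α, Rs a b → rbcMu rd L a < rbcMu rd L b := by
    intro a b hab
    obtain ⟨hne, hPab | ⟨hr, hlt⟩⟩ := hab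
    · rcases lt_or_eq_of_le (hPrd a b hPab) with h | hr
      · exact Prod.Lex.toLex_lt_toLex.2 (Or.inl h)
      · refine Prod.Lex.toLex_lt_toLex.2 (Or.inr ⟨hr, ?_⟩)
        rw [rbcPc_congr rd L hr a rfl]
        refine pclt (rd b) _ _ ?_
        letI := L (rd b)
        rcases lt_or_eq_of_le (hLP (rd b) a b hr rfl hPab) with h | h
        · exact h
        · exact absurd (congrArg Subtype.val h) hne
    · refine Prod.Lex.toLex_lt_toLex.2 (Or.inr ⟨hr, ?_⟩)
      rw [rbcPc_congr rd L hr a rfl]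
      exact pclt (rd b) _ _ hlt
  have muTG : ∀ a b : α, Relation.TransGen Rs a b → rbcMu rd L a < rbcMu rd L b := by
    intro a b h
    induction h with
    | single h => exact muRs _ _ h
    | tail _ h ih => exact lt_trans ih (muRs _ _ h)
  -- Rs is well-founded
  have wfRs : WellFounded Rs :=
    Subrelation.wf (fun {a b} h => muRs a b h) (InvImage.wf (rbcMu rd L) wellFounded_lt)
  -- finite predecessors for Rs
  have Rsfin : ∀ a : α, {b | Rs b a}.Finite := by
    intro a
    have : {b | Rs b a} ⊆ {b | P b a} ∪
        Subtype.val '' {y : {x : α // rd x = rd a} | (L (rd a)).lt y ⟨a, rfl⟩} := by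
      rintro b ⟨hne, hP | ⟨hr, hlt⟩⟩
      · exact Or.inl hP
      · exact Or.inr ⟨⟨b, hr⟩, hlt, rfl⟩
    exact ((hPfin a).union ((hLfin (rd a) ⟨a, rfl⟩).image _)).subset this
  -- finite transitive pasts
  have TGfin : ∀ a : α, {b | Relation.TransGen Rs b a}.Finite := by
    intro a
    induction a using wfRs.induction with
    | _ x ih =>
      have hsub : {b | Relation.TransGen Rs b x} ⊆
          ⋃ c ∈ {c | Rs c x}, insert c {b | Relation.TransGen Rs b c} := by
        intro b hb
        cases hb with
        | single h => exact Set.mem_biUnion h (Set.mem_insert _ _)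
        | tail h₁ h₂ =>
          exact Set.mem_biUnion h₂ (Set.mem_insert_of_mem _ h₁)
      exact ((Rsfin x).biUnion fun c hc => ((ih c hc).insert c)).subset hsub
  -- e is injective
  have einj : Function.Injective (rbcE rd L) := by
    intro a b h
    have h' := Nat.pair_eq_pair.1 h
    obtain ⟨hr, hp⟩ := h'
    rw [rbcPc_congr rd L hr a rfl] at hp
    have := pcinj (rd b) ⟨a, hr⟩ ⟨b, rfl⟩ hp
    exact congrArg Subtype.val this
  -- f is ≤-monotone along TransGen, indeed along ReflTransGen
  have fmem : ∀ a : α, rbcF rd L P a ∈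
      {n | ∃ c, rbcE rd L c = n ∧ Relation.ReflTransGen Rs a c} := by
    intro a
    exact Nat.sInf_mem ⟨rbcE rd L a, a, rfl, Relation.ReflTransGen.refl⟩
  have fmono : ∀ a b : α, Relation.ReflTransGen Rs a b → rbcF rd L P a ≤ rbcF rd L P b := by
    intro a b h
    obtain ⟨c, hc, hbc⟩ := fmem b
    exact Nat.sInf_le ⟨c, hc, h.trans hbc⟩
  -- k strictly decreases along TransGen
  have kTG : ∀ a b : α, Relation.TransGen Rs a b → rbcK rd L P a < rbcK rd L P b := by
    intro a b h
    refine Set.ncard_lt_ncard ⟨fun c hc => hc.trans h, fun hsub => ?_⟩ (TGfin b)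
    have : Relation.TransGen Rs a a := hsub h
    exact absurd (muTG a a this) (lt_irrefl _)
  -- key strictly increases along TransGen
  have keyTG : ∀ a b : α, Relation.TransGen Rs a b →
      rbcKey rd L P a < rbcKey rd L P b := by
    intro a b h
    rcases lt_or_eq_of_le (fmono a b h.to_reflTransGen) with hf | hf
    · exact Prod.Lex.toLex_lt_toLex.2 (Or.inl hf)
    · exact Prod.Lex.toLex_lt_toLex.2 (Or.inr ⟨hf, Prod.Lex.toLex_lt_toLex.2 (Or.inl (kTG a b h))⟩)
  have keyinj : Function.Injective (rbcKey rd L P) := by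
    intro a b h
    have h1 : (ofLex (rbcKey rd L P a)) = ofLex (rbcKey rd L P b) := congrArg _ h
    have h2 := congrArg Prod.snd h1
    have h3 : (ofLex ((ofLex (rbcKey rd L P a)).2)) = ofLex ((ofLex (rbcKey rd L P b)).2) :=
      congrArg _ h2
    exact einj (congrArg Prod.snd h3)
  -- the global linear order
  letI L' : LinearOrder α := LinearOrder.lift' (rbcKey rd L P) keyinj
  have hltiff : ∀ a b : α, L'.lt a b ↔ rbcKey rd L P a < rbcKey rd L P b := by
    intro a b
    constructor
    · intro h; exact lt_of_le_of_ne h.le (fun he => h.ne (keyinj he))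
    · intro h; exact lt_of_le_of_ne h.le (fun he => h.ne (congrArg _ he))
  refine ⟨L', ?_, ?_, ?_⟩
  · intro a b hPab
    by_cases hne : a = b
    · subst hne; exact le_refl _
    · exact le_of_lt (keyTG a b (Relation.TransGen.single ⟨hne, Or.inl hPab⟩))
  · intro r a b ha hb hle
    subst hb
    by_cases hab : a = b
    · subst hab; exact le_refl _
    · have hne : (⟨a, ha⟩ : {x : α // rd x = rd b}) ≠ ⟨b, rfl⟩ :=
        fun h => hab (congrArg Subtype.val h)
      have hlt : (L (rd b)).lt ⟨a, ha⟩ ⟨b, rfl⟩ :=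
        @lt_of_le_of_ne _ (L (rd b)).toPartialOrder _ _ hle hne
      exact le_of_lt (keyTG a b (Relation.TransGen.single ⟨hab, Or.inr ⟨ha, hlt⟩⟩))
  · intro a
    have hfin : ∀ N : ℕ, {b : α | rbcF rd L P b ≤ N}.Finite := by
      intro N
      have hS : ∀ n : ℕ, {b : α | ∃ c, rbcE rd L c = n ∧ Relation.ReflTransGen Rs b c}.Finite := by
        intro n
        by_cases hc : ∃ c, rbcE rd L c = n
        · obtain ⟨c, hc⟩ := hc
          refine ((TGfin c).insert c).subset ?_
          rintro b ⟨c', hc', hbc'⟩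
          have : c' = c := einj (hc'.trans hc.symm)
          subst this
          rcases Relation.reflTransGen_iff_eq_or_transGen.1 hbc' with h | h
          · exact h ▸ Set.mem_insert _ _
          · exact Set.mem_insert_of_mem _ h
        · convert Set.finite_empty
          ext b
          simp only [Set.mem_setOf_eq, Set.mem_empty_iff_false, iff_false]
          rintro ⟨c, hcn, -⟩
          exact hc ⟨c, hcn⟩
      have hsub : {b : α | rbcF rd L P b ≤ N} ⊆
          ⋃ n ∈ Finset.range (N + 1),
            {b : α | ∃ c, rbcE rd L c = n ∧ Relation.ReflTransGen Rs b c} := by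
        intro b hb
        obtain ⟨c, hc, hbc⟩ := fmem b
        exact Set.mem_biUnion (Finset.mem_range.2 (Nat.lt_succ_of_le hb)) ⟨c, hc, hbc⟩
      exact (Set.Finite.biUnion (Finset.range (N + 1)).finite_toSet fun n _ => hS n).subset hsub
    refine (hfin (rbcF rd L P a)).subset ?_
    intro b hb
    have hlt : rbcKey rd L P b < rbcKey rd L P a := (hltiff b a).1 hb
    rcases Prod.Lex.toLex_lt_toLex.1 hlt with h | ⟨h, -⟩
    · exact le_of_lt h
    · exact le_of_eq h
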